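/- Let a, b, c, d be integers with a·d − b·c ≠ 0, let m be a positive integer, and let K be the additive subgroup of ℤ × ℤ generated by (a, b) and (c, d), and L the additive subgroup generated by (m, 0) and (0, m). Assume L ≤ K (i.e., (m,0) and (0,m) are integer combinations of (a,b) and (c,d)). Then |a·d − b·c| divides m², and the index of L in K equals m²/|a·d − b·c|. -/

import Mathlib

open Submodule

/-- The index of a submodule of a free `ℤ`-module, given a basis of the submodule indexed by
the same (finite) type as a basis of the module, equals the absolute value of the determinant
of the submodule basis expressed in the module basis. -/
lemma aux_index_eq_natAbs_det {M : Type*} [AddCommGroup M] [Module ℤ M]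
    {ι : Type*} [Fintype ι] [DecidableEq ι] (b : Module.Basis ι ℤ M) (N : Submodule ℤ M)
    (bN : @Module.Basis ι ℤ N _ _ N.module) :
    N.toAddSubgroup.index = (b.det ((↑) ∘ bN)).natAbs := by
  letI : Module ℤ N := N.module
  obtain ⟨n, snf⟩ := N.smithNormalForm b
  have hn : n = Fintype.card ι := by
    simpa using Fintype.card_congr (snf.bN.indexEquiv bN)
  have hbij : Function.Bijective snf.f :=
    (Fintype.bijective_iff_injective_and_card snf.f).2 ⟨snf.f.injective, by simp [hn]⟩
  let feq : Fin n ≃ ι := Equiv.ofBijective snf.f hbij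
  have hfeq : ∀ j, snf.f (feq.symm j) = j := fun j => feq.apply_symm_apply j
  -- index in terms of the Smith coefficients
  have h0 : Fintype.card ι - n = 0 := by omega
  have hidx : N.toAddSubgroup.index = ∏ i : Fin n, (snf.a i).natAbs := by
    rw [snf.toAddSubgroup_index_eq_pow_mul_prod, h0, pow_zero, one_mul]
    simp [Ideal.span_singleton_toAddSubgroup_eq_zmultiples, Int.index_zmultiples]
  -- the determinant of the inclusion composed with a basis equivalence
  let e2 : M ≃ₗ[ℤ] N := snf.bM.equiv snf.bN feq.symm
  let g : M →ₗ[ℤ] M := N.subtype ∘ₗ (e2 : M →ₗ[ℤ] N)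
  have hg : ∀ i, g (snf.bM i) = snf.a (feq.symm i) • snf.bM i := by
    intro i
    have h1 : g (snf.bM i) = ((snf.bN (feq.symm i)) : M) := by
      simp [g, e2, Module.Basis.equiv_apply]
    rw [h1, snf.snf, hfeq]
    first
    | rfl
    | exact (Int.cast_smul_eq_zsmul (R := ℤ) _ _).symm
    | exact Int.cast_smul_eq_zsmul (R := ℤ) _ _
  have hmat : LinearMap.toMatrix snf.bM snf.bM g
      = Matrix.diagonal (fun i => snf.a (feq.symm i)) := by
    ext i j
    rcases eq_or_ne i j with rfl | h
    · simp [LinearMap.toMatrix_apply, hg]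
    · simp [LinearMap.toMatrix_apply, hg, Matrix.diagonal_apply_ne _ h,
        Finsupp.single_apply, Ne.symm h]
  have hdetg : (LinearMap.det g).natAbs = ∏ i : Fin n, (snf.a i).natAbs := by
    rw [← LinearMap.det_toMatrix snf.bM, hmat, Matrix.det_diagonal]
    calc (∏ i : ι, snf.a (feq.symm i)).natAbs
        = ∏ i : ι, (snf.a (feq.symm i)).natAbs := map_prod Int.natAbsHom _ _
      _ = ∏ i : Fin n, (snf.a i).natAbs :=
          Equiv.prod_comp feq.symm (fun j => (snf.a j).natAbs)
  have hassoc : Associated (b.det ((↑) ∘ bN)) (LinearMap.det g) := by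
    have h1 : ((↑) ∘ bN : ι → M) = (N.subtype ∘ bN) := rfl
    rw [h1, Module.Basis.det_comp_basis]
    exact LinearMap.associated_det_comp_equiv _ _ _
  rw [hidx, ← hdetg, Int.natAbs_eq_iff_associated.mpr hassoc]

/-- The index of the subgroup of `ℤ × ℤ` generated by `(a, b)` and `(c, d)`
with `a*d - b*c ≠ 0`. -/
lemma aux_closure_pair_index (a b c d : ℤ) (had : a * d - b * c ≠ 0) :
    (AddSubgroup.closure {((a, b) : ℤ × ℤ), (c, d)}).index = (a * d - b * c).natAbs := by
  set v : Fin 2 → ℤ × ℤ := ![(a, b), (c, d)] with hv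
  have li : LinearIndependent ℤ v := by
    rw [hv, LinearIndependent.pair_iff]
    intro s t hst
    have h1 : s * a + t * c = 0 := congrArg Prod.fst hst
    have h2 : s * b + t * d = 0 := congrArg Prod.snd hst
    constructor
    · have h3 : s * (a * d - b * c) = 0 := by linear_combination d * h1 - c * h2
      rcases mul_eq_zero.mp h3 with h | h
      · exact h
      · exact absurd h had
    · have h3 : t * (a * d - b * c) = 0 := by linear_combination -b * h1 + a * h2
      rcases mul_eq_zero.mp h3 with h | h
      · exact h
      · exact absurd h had
  have hrange : Set.range v = {((a, b) : ℤ × ℤ), (c, d)} := by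
    ext x
    simp only [Set.mem_range, Fin.exists_fin_two, hv]
    simp only [Matrix.cons_val_zero, Matrix.cons_val_one, Matrix.head_cons,
      Set.mem_insert_iff, Set.mem_singleton_iff]
    constructor
    · rintro (h | h) <;> [left; right] <;> exact h.symm
    · rintro (h | h) <;> [left; right] <;> exact h.symm
  have hcl : AddSubgroup.closure {((a, b) : ℤ × ℤ), (c, d)}
      = (span ℤ (Set.range v)).toAddSubgroup := by
    rw [hrange, span_int_eq_addSubgroupClosure]
  rw [hcl, aux_index_eq_natAbs_det (Module.Basis.finTwoProd ℤ) _ (Module.Basis.span li)]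
  congr 1
  rw [Module.Basis.det_apply, Matrix.det_fin_two]
  have hc : ∀ i, ((Module.Basis.span li i : ℤ × ℤ)) = v i := fun i => congrArg Subtype.val (Module.Basis.span_apply li i)
  simp only [Module.Basis.toMatrix_apply, Function.comp_apply, hc]
  rw [hv]
  simp [Module.Basis.coe_finTwoProd_repr]
  ring

/-- Sheet-counting (Claim 3.4) in coordinates: if `L = ⟨(m,0),(0,m)⟩ ≤ K = ⟨(a,b),(c,d)⟩`
in `ℤ × ℤ` with `ad − bc ≠ 0`, then `|ad − bc|` divides `m²` and the index of `L`
in `K` is `m²/|ad − bc|`. -/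
theorem stmt_4 (a b c d : ℤ) (had : a * d - b * c ≠ 0) (m : ℕ) (hm : 0 < m)
    (K L : AddSubgroup (ℤ × ℤ))
    (hK : K = AddSubgroup.closure {(a, b), (c, d)})
    (hL : L = AddSubgroup.closure {((m : ℤ), 0), (0, (m : ℤ))})
    (hLK : L ≤ K) :
    (a * d - b * c).natAbs ∣ m ^ 2 ∧
    L.relIndex K = m ^ 2 / (a * d - b * c).natAbs := by
  have hKidx : K.index = (a * d - b * c).natAbs := by
    rw [hK]; exact aux_closure_pair_index a b c d had
  have hmne : ((m : ℤ) * (m : ℤ) - 0 * 0 : ℤ) ≠ 0 := by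
    have : (m : ℤ) ≠ 0 := Int.natCast_ne_zero.mpr hm.ne'
    simpa using mul_ne_zero this this
  have hLidx : L.index = m ^ 2 := by
    rw [hL, aux_closure_pair_index (m : ℤ) 0 0 (m : ℤ) hmne]
    simp [pow_two, Int.natAbs_mul]
  have hmul : L.relIndex K * K.index = L.index := AddSubgroup.relIndex_mul_index hLK
  rw [hKidx, hLidx] at hmul
  have hne : (a * d - b * c).natAbs ≠ 0 := Int.natAbs_ne_zero.mpr had
  refine ⟨⟨L.relIndex K, by rw [← hmul]; ring⟩, ?_⟩
  rw [← hmul, Nat.mul_div_cancel _ (Nat.pos_of_ne_zero hne)]
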